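/- Let B = σ_k be the braid group generator on n strands and φ_{σ_k} the algebra endomorphism of the free unital ℤ/2-algebra on generators {a_{ij} : 1 ≤ i ≠ j ≤ n} defined by: a_{ki} ↦ a_{k+1,i} + a_{k+1,k}a_{ki} and a_{ik} ↦ a_{i,k+1} + a_{ik}a_{k,k+1} for i ≠ k, k+1; a_{k+1,i} ↦ a_{ki} and a_{i,k+1} ↦ a_{ik} for i ≠ k, k+1; a_{k,k+1} ↦ a_{k+1,k}; a_{k+1,k} ↦ a_{k,k+1}; and a_{ij} ↦ a_{ij} for i, j ∉ {k, k+1}. Then φ_{σ_k} is an algebra automorphism (i.e., it is invertible). -/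

import Mathlib

/- STATEMENT 18: The map φ_{σ_k} associated to the braid generator σ_k, defined
on the generators a_{ij} (i ≠ j) of the free unital ℤ/2-algebra 𝒜ₙ by
  a_{k,k+1} ↦ a_{k+1,k},  a_{k+1,k} ↦ a_{k,k+1},
  a_{ki} ↦ a_{k+1,i} + a_{k+1,k}a_{ki},  a_{ik} ↦ a_{i,k+1} + a_{ik}a_{k,k+1}
    (i ∉ {k,k+1}),
  a_{k+1,i} ↦ a_{ki},  a_{i,k+1} ↦ a_{ik}  (i ∉ {k,k+1}),
  a_{ij} ↦ a_{ij}  (i,j ∉ {k,k+1}),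
and extended as an algebra homomorphism, is an algebra automorphism of 𝒜ₙ
(i.e. it is bijective).  Signs are suppressed since coefficients are in ℤ/2. -/

/-- Index set of the generators a_{ij}, i ≠ j. -/
def G (n : ℕ) : Type := {x : Fin n × Fin n // x.1 ≠ x.2}

/-- The free unital associative ℤ/2-algebra on the a_{ij}. -/
abbrev A (n : ℕ) := FreeAlgebra (ZMod 2) (G n)

/-- The generator a_{ij} (defined to be 0 in the irrelevant case i = j). -/
noncomputable def gen (n : ℕ) (i j : Fin n) : A n :=
  if h : i ≠ j then FreeAlgebra.ι (ZMod 2) (⟨(i, j), h⟩ : G n) else 0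

/-- The value of φ_{σ_k} on the generator a_{ij}; here `k'` denotes k+1. -/
noncomputable def phiGen (n : ℕ) (k k' : Fin n) (x : G n) : A n :=
  let i := x.1.1
  let j := x.1.2
  if i = k ∧ j = k' then gen n k' k
  else if i = k' ∧ j = k then gen n k k'
  else if i = k then gen n k' j + gen n k' k * gen n k j
  else if j = k then gen n i k' + gen n i k * gen n k k'
  else if i = k' then gen n k j
  else if j = k' then gen n i k
  else gen n i j

lemma addself (n : ℕ) (a : A n) : a + a = 0 := by
  rw [← two_mul]
  have h2 : (2 : A n) = 0 := by
    rw [← one_add_one_eq_two, ← map_one (algebraMap (ZMod 2) (A n)), ← map_add]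
    rw [show (1 + 1 : ZMod 2) = 0 from by decide, map_zero]
  rw [h2, zero_mul]

lemma cancel (n : ℕ) (a b : A n) : a + b + b = a := by
  rw [add_assoc, addself, add_zero]

lemma lift_gen (n : ℕ) (f : G n → A n) {i j : Fin n} (h : i ≠ j) :
    FreeAlgebra.lift (ZMod 2) f (gen n i j) = f ⟨(i, j), h⟩ := by
  rw [gen, dif_pos h]
  exact FreeAlgebra.lift_ι_apply f _

lemma comp_id (n : ℕ) (k k' : Fin n) (hkk : k ≠ k') (x : G n) :
    FreeAlgebra.lift (ZMod 2) (phiGen n k' k) (phiGen n k k' x) =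
      FreeAlgebra.ι (ZMod 2) x := by
  obtain ⟨⟨i, j⟩, hij⟩ := x
  have hix : FreeAlgebra.ι (ZMod 2) (⟨(i, j), hij⟩ : G n) = gen n i j := by
    rw [gen, dif_pos hij]
    rfl
  refine Eq.trans ?_ hix.symm
  show FreeAlgebra.lift (ZMod 2) (phiGen n k' k)
    (if i = k ∧ j = k' then gen n k' k
    else if i = k' ∧ j = k then gen n k k'
    else if i = k then gen n k' j + gen n k' k * gen n k j
    else if j = k then gen n i k' + gen n i k * gen n k k'
    else if i = k' then gen n k j
    else if j = k' then gen n i k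
    else gen n i j) = gen n i j
  by_cases h1 : i = k ∧ j = k'
  · obtain ⟨rfl, rfl⟩ := h1
    rw [if_pos ⟨rfl, rfl⟩, lift_gen n _ hij.symm]
    simp only [phiGen]
    simp [hij.symm]
  by_cases h2 : i = k' ∧ j = k
  · obtain ⟨rfl, rfl⟩ := h2
    rw [if_neg h1, if_pos ⟨rfl, rfl⟩, lift_gen n _ hij.symm]
    simp only [phiGen]
    simp [hij.symm]
  by_cases h3 : i = k
  · -- j ≠ k', j ≠ k
    subst h3
    have hj' : j ≠ k' := fun h => h1 ⟨rfl, h⟩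
    rw [if_neg h1, if_neg h2, if_pos rfl, map_add, map_mul,
      lift_gen n _ (show k' ≠ j from (Ne.symm hj')),
      lift_gen n _ (show k' ≠ i from (Ne.symm hkk)),
      lift_gen n _ hij]
    simp only [phiGen]
    simp only [if_pos, if_neg, hkk, hkk.symm, hij, hij.symm, hj', hj'.symm,
      and_true, and_false, false_and, true_and, if_true, if_false, ne_eq,
      not_false_iff, eq_self_iff_true, if_pos rfl]
    exact cancel n _ _
  by_cases h4 : j = k
  · subst h4
    have hi' : i ≠ k' := fun h => h2 ⟨h, rfl⟩
    rw [if_neg h1, if_neg h2, if_neg h3, if_pos rfl, map_add, map_mul,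
      lift_gen n _ (show i ≠ k' from hi'),
      lift_gen n _ hij,
      lift_gen n _ (show j ≠ k' from hkk)]
    simp only [phiGen]
    simp only [if_pos, if_neg, hkk, hkk.symm, hij, hij.symm, hi', hi'.symm,
      and_true, and_false, false_and, true_and, if_true, if_false, ne_eq,
      not_false_iff, eq_self_iff_true, if_pos rfl]
    exact cancel n _ _
  by_cases h5 : i = k'
  · subst h5
    have hj : j ≠ k := h4
    have hj' : j ≠ i := hij.symm
    rw [if_neg h1, if_neg h2, if_neg h3, if_neg h4, if_pos rfl,
      lift_gen n _ (show k ≠ j from Ne.symm hj)]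
    simp only [phiGen]
    simp [hkk, hkk.symm, hij, hij.symm, hj, hj']
  by_cases h6 : j = k'
  · subst h6
    rw [if_neg h1, if_neg h2, if_neg h3, if_neg h4, if_neg h5,
      if_pos rfl, lift_gen n _ (show i ≠ k from h3)]
    simp only [phiGen]
    simp [hkk, hkk.symm, hij, hij.symm, h3, h4, h5]
  · rw [if_neg h1, if_neg h2, if_neg h3, if_neg h4, if_neg h5, if_neg h6,
      lift_gen n _ hij]
    simp only [phiGen]
    simp [h3, h4, h5, h6]


/-- φ_{σ_k}, the algebra endomorphism of 𝒜ₙ induced by the above values on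
generators, is an automorphism. -/
theorem phi_sigma_automorphism (n : ℕ) (k k' : Fin n)
    (hk : (k : ℕ) + 1 = (k' : ℕ)) :
    Function.Bijective (FreeAlgebra.lift (ZMod 2) (phiGen n k k')) := by
  have hkk : k ≠ k' := by
    intro h; rw [h] at hk; omega
  have key1 := comp_id n k k' hkk
  have key2 := comp_id n k' k hkk.symm
  have h1 : (FreeAlgebra.lift (ZMod 2) (phiGen n k' k)).comp
      (FreeAlgebra.lift (ZMod 2) (phiGen n k k')) = AlgHom.id (ZMod 2) (A n) := by
    apply FreeAlgebra.hom_ext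
    funext x
    simpa [FreeAlgebra.lift_ι_apply] using key1 x
  have h2 : (FreeAlgebra.lift (ZMod 2) (phiGen n k k')).comp
      (FreeAlgebra.lift (ZMod 2) (phiGen n k' k)) = AlgHom.id (ZMod 2) (A n) := by
    apply FreeAlgebra.hom_ext
    funext x
    simpa [FreeAlgebra.lift_ι_apply] using key2 x
  refine Function.bijective_iff_has_inverse.2
    ⟨FreeAlgebra.lift (ZMod 2) (phiGen n k' k), fun a => ?_, fun a => ?_⟩
  · exact DFunLike.congr_fun h1 a
  · exact DFunLike.congr_fun h2 a
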